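/- Let M be a nonzero finitely generated right module over a crossed product D∗A of a finitely generated free abelian group A over a division ring D, with gk(M) ≥ 1. Let C < A be an infinite cyclic subgroup such that M is D∗C-torsion, and let V be a carrier space of Δ*(M), so that V = ker(res_{B_V}) for an isolated subgroup B_V ≤ A. Then B_V ∩ C ≠ ⟨1⟩. -/

import Mathlib

open MulOpposite

universe u v

/-- `IsCrossedProduct D R ι bar σ τ` : the ring `R` is a crossed product `D∗A` of the free
abelian group `A = ℤⁿ` over the division ring `D`: the units `bar a` (`a ∈ A`) form a
`D`-basis of `R` (`D` acting via the embedding `ι`), with `bar a₁ * bar a₂ =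
τ(a₁,a₂)·bar (a₁a₂)` and `bar a * d = σ_a(d) * bar a`. -/
structure IsCrossedProduct (D : Type u) [DivisionRing D] {n : ℕ} (R : Type v) [Ring R]
    (ι : D →+* R) (bar : (Fin n → ℤ) → Rˣ) (σ : (Fin n → ℤ) → D ≃+* D)
    (τ : (Fin n → ℤ) → (Fin n → ℤ) → D) : Prop where
  τ_ne_zero : ∀ a b, τ a b ≠ 0
  mul_bar : ∀ a b, (bar a : R) * bar b = ι (τ a b) * bar (a + b)
  bar_comm : ∀ a d, (bar a : R) * ι d = ι (σ a d) * bar a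
  repr_unique : ∀ r : R, ∃! c : (Fin n → ℤ) →₀ D, r = c.sum fun a d => ι d * (bar a : R)

/-- The set of `D`-linear combinations of `{bar b : b ∈ B}` in `R`; for a subgroup
`B ≤ A` this is the sub-crossed-product `D∗B` of `D∗A`. -/
def cpSpan {D : Type u} [DivisionRing D] {n : ℕ} {R : Type v} [Ring R] (ι : D →+* R)
    (bar : (Fin n → ℤ) → Rˣ) (B : AddSubgroup (Fin n → ℤ)) : Set R :=
  { r | ∃ c : (Fin n → ℤ) →₀ D, (∀ a ∈ c.support, a ∈ B) ∧
      r = c.sum fun a d => ι d * (bar a : R) }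

/-- A right `D∗A`-module `M` is `D∗B`-torsion if every element of `M` is annihilated by a
nonzero element of `D∗B`. -/
def IsCPTorsionOver {D : Type u} [DivisionRing D] {n : ℕ} {R : Type v} [Ring R]
    (ι : D →+* R) (bar : (Fin n → ℤ) → Rˣ) (B : AddSubgroup (Fin n → ℤ)) (M : Type*)
    [AddCommGroup M] [Module Rᵐᵒᵖ M] : Prop :=
  ∀ m : M, ∃ β ∈ cpSpan ι bar B, β ≠ 0 ∧ op β • m = 0

noncomputable def rk' {n : ℕ} (B : AddSubgroup (Fin n → ℤ)) : ℕ := Module.finrank ℤ B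

/-- The Gelfand–Kirillov dimension (measured over `D`) of a finitely generated right module
over the crossed product `D∗A`, via the Brookes–Groves characterization: the supremum of
the ranks of subgroups `B ≤ A` such that `M` is not `D∗B`-torsion. -/
noncomputable def gkCP {D : Type u} [DivisionRing D] {n : ℕ} {R : Type v} [Ring R]
    (ι : D →+* R) (bar : (Fin n → ℤ) → Rˣ) (M : Type*) [AddCommGroup M]
    [Module Rᵐᵒᵖ M] : ℕ :=
  sSup { r : ℕ | ∃ B : AddSubgroup (Fin n → ℤ), ¬ IsCPTorsionOver ι bar B M ∧ rk' B = r }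

section BrookesGroves

variable {D : Type u} [DivisionRing D] {n : ℕ} {R : Type u} [Ring R]

/-- The pairing between a character `φ ∈ A* = Hom_ℤ(A, ℝ) ≅ ℝⁿ` and a group element
`a ∈ A = ℤⁿ`. -/
def charPair {n : ℕ} (φ : EuclideanSpace ℝ (Fin n)) (a : Fin n → ℤ) : ℝ :=
  ∑ i, φ i * (a i : ℝ)

/-- The `D`-span in `D∗A` of the `bar a` for `a` in an arbitrary subset `T ⊆ A`; applied
below to the submonoid `A(0,φ)` and the subsemigroup `A(+,φ)`. -/
def cpSpanSet {D : Type u} [DivisionRing D] {n : ℕ} {R : Type u} [Ring R] (ι : D →+* R)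
    (bar : (Fin n → ℤ) → Rˣ) (T : Set (Fin n → ℤ)) : Set R :=
  { r | ∃ c : (Fin n → ℤ) →₀ D, (∀ a ∈ c.support, a ∈ T) ∧
      r = c.sum fun a d => ι d * (bar a : R) }

/-- `X·(D∗A(0,φ))` (for `cmp = (· ≤ ·)`), resp. `X·(D∗A(+,φ))` (for `cmp = (· < ·)`):
the additive subgroup of `M` of finite sums `Σ (op βᵢ) • xᵢ` with `xᵢ ∈ X` and
`βᵢ ∈ D∗A(0,φ)` resp. `D∗A(+,φ)`. -/
def trailingSub (ι : D →+* R) (bar : (Fin n → ℤ) → Rˣ) (M : Type u) [AddCommGroup M]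
    [Module Rᵐᵒᵖ M] (X : Finset M) (T : Set (Fin n → ℤ)) : AddSubgroup M :=
  AddSubgroup.closure { m : M | ∃ x ∈ X, ∃ β ∈ cpSpanSet ι bar T, m = op β • x }

/-- `Δ(M)`: the set of characters `φ ∈ A* ≅ ℝⁿ` whose trailing coefficient module
`TC_φ(M) = X·(D∗A(0,φ)) / X·(D∗A(+,φ))` is nonzero (`X` a finite generating set of `M`;
the set is independent of this choice). -/
def DeltaSet (ι : D →+* R) (bar : (Fin n → ℤ) → Rˣ) (M : Type u) [AddCommGroup M]
    [Module Rᵐᵒᵖ M] (X : Finset M) : Set (EuclideanSpace ℝ (Fin n)) :=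
  { φ | trailingSub ι bar M X { a | 0 ≤ charPair φ a }
      ≠ trailingSub ι bar M X { a | 0 < charPair φ a } }

/-- A neighborhood of `x` in `S ⊆ ℝⁿ` is an `m`-ball: the intersection of some ball
centered at `x` with `S` equals its intersection with an `m`-dimensional subspace. -/
def NbhdIsBall {n : ℕ} (S : Set (EuclideanSpace ℝ (Fin n)))
    (x : EuclideanSpace ℝ (Fin n)) (m : ℕ) : Prop :=
  ∃ ε > (0:ℝ), ∃ W : Submodule ℝ (EuclideanSpace ℝ (Fin n)), Module.finrank ℝ W = m ∧
    S ∩ Metric.ball x ε = ↑W ∩ Metric.ball x ε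

/-- `x` is a regular point of `S`: some neighborhood of `x` in `S` is an `m`-ball and `S`
has no points with this property for larger `m`. -/
def IsRegularPt {n : ℕ} (S : Set (EuclideanSpace ℝ (Fin n)))
    (x : EuclideanSpace ℝ (Fin n)) : Prop :=
  x ∈ S ∧ ∃ m : ℕ, NbhdIsBall S x m ∧ ∀ y ∈ S, ∀ m', NbhdIsBall S y m' → m' ≤ m

/-- The essential part `S*` of `S`: the closure of the set of regular points of `S`. -/
def essentialPart {n : ℕ} (S : Set (EuclideanSpace ℝ (Fin n))) :
    Set (EuclideanSpace ℝ (Fin n)) :=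
  closure { x | IsRegularPt S x }

/-- `V` is a carrier space of `S`: the vector span of a (small) neighborhood of a regular
point of `S`. -/
def IsCarrierSpace {n : ℕ} (S : Set (EuclideanSpace ℝ (Fin n)))
    (V : Submodule ℝ (EuclideanSpace ℝ (Fin n))) : Prop :=
  ∃ x, IsRegularPt S x ∧ ∃ ε > (0:ℝ), V = Submodule.span ℝ (S ∩ Metric.ball x ε)

/-! ### Auxiliary lemmas -/

lemma cp_zero_mem (ι : D →+* R) (bar : (Fin n → ℤ) → Rˣ) (U : Set (Fin n → ℤ)) :
    (0 : R) ∈ cpSpanSet ι bar U :=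
  ⟨0, by simp, by simp⟩

lemma cp_add_mem {ι : D →+* R} {bar : (Fin n → ℤ) → Rˣ} {U : Set (Fin n → ℤ)} {r s : R}
    (hr : r ∈ cpSpanSet ι bar U) (hs : s ∈ cpSpanSet ι bar U) :
    r + s ∈ cpSpanSet ι bar U := by
  obtain ⟨cr, hcr, rfl⟩ := hr
  obtain ⟨cs, hcs, rfl⟩ := hs
  refine ⟨cr + cs, fun a ha => ?_, ?_⟩
  · rcases Finset.mem_union.1 (Finsupp.support_add ha) with h | h
    exacts [hcr a h, hcs a h]
  · rw [Finsupp.sum_add_index' (fun a => by simp) (fun a b₁ b₂ => by rw [map_add, add_mul])]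

lemma cp_neg_mem {ι : D →+* R} {bar : (Fin n → ℤ) → Rˣ} {U : Set (Fin n → ℤ)} {r : R}
    (hr : r ∈ cpSpanSet ι bar U) : -r ∈ cpSpanSet ι bar U := by
  obtain ⟨cr, hcr, rfl⟩ := hr
  refine ⟨-cr, fun a ha => hcr a (by simpa using ha), ?_⟩
  rw [Finsupp.sum, Finsupp.sum, Finsupp.support_neg, ← Finset.sum_neg_distrib]
  exact Finset.sum_congr rfl fun a _ => by simp [neg_mul]

lemma cp_sum_mem {ι : D →+* R} {bar : (Fin n → ℤ) → Rˣ} {U : Set (Fin n → ℤ)}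
    {α : Type*} (s : Finset α) (g : α → R)
    (hg : ∀ a ∈ s, g a ∈ cpSpanSet ι bar U) : (∑ a ∈ s, g a) ∈ cpSpanSet ι bar U := by
  classical
  induction s using Finset.induction_on with
  | empty => simpa using cp_zero_mem ι bar U
  | insert _ _ hni ih =>
      rw [Finset.sum_insert hni]
      exact cp_add_mem (hg _ (Finset.mem_insert_self _ _))
        (ih fun a ha => hg a (Finset.mem_insert_of_mem ha))

lemma cp_mono {ι : D →+* R} {bar : (Fin n → ℤ) → Rˣ} {U U' : Set (Fin n → ℤ)}
    (hUU : U ⊆ U') : cpSpanSet ι bar U ⊆ cpSpanSet ι bar U' := by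
  rintro r ⟨c, hc, rfl⟩
  exact ⟨c, fun a ha => hUU (hc a ha), rfl⟩

lemma cp_single_mem (ι : D →+* R) (bar : (Fin n → ℤ) → Rˣ) {U : Set (Fin n → ℤ)}
    (d : D) {a : Fin n → ℤ} (ha : a ∈ U) : ι d * (bar a : R) ∈ cpSpanSet ι bar U := by
  refine ⟨Finsupp.single a d, fun b hb => ?_, ?_⟩
  · have : b = a := Finset.mem_singleton.1 (Finsupp.support_single_subset hb)
    rwa [this]
  · rw [Finsupp.sum_single_index (by simp)]

lemma cp_prod {ι : D →+* R} {bar : (Fin n → ℤ) → Rˣ} {σ : (Fin n → ℤ) → D ≃+* D}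
    {τ : (Fin n → ℤ) → (Fin n → ℤ) → D} (h : IsCrossedProduct D R ι bar σ τ)
    (d d' : D) (a b : Fin n → ℤ) :
    (ι d * (bar a : R)) * (ι d' * (bar b : R))
      = ι (d * σ a d' * τ a b) * (bar (a + b) : R) := by
  have h1 := h.bar_comm a d'
  have h2 := h.mul_bar a b
  calc (ι d * (bar a : R)) * (ι d' * (bar b : R))
      = ι d * (((bar a : R) * ι d') * (bar b : R)) := by
        simp only [mul_assoc]
    _ = ι d * ((ι (σ a d') * (bar a : R)) * (bar b : R)) := by rw [h1]
    _ = ι d * (ι (σ a d') * ((bar a : R) * (bar b : R))) := by rw [mul_assoc]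
    _ = ι d * (ι (σ a d') * (ι (τ a b) * (bar (a + b) : R))) := by rw [h2]
    _ = ι (d * σ a d' * τ a b) * (bar (a + b) : R) := by
        simp only [map_mul, mul_assoc]

lemma cp_mul_mem {ι : D →+* R} {bar : (Fin n → ℤ) → Rˣ} {σ : (Fin n → ℤ) → D ≃+* D}
    {τ : (Fin n → ℤ) → (Fin n → ℤ) → D} (h : IsCrossedProduct D R ι bar σ τ)
    {U U' : Set (Fin n → ℤ)} {r s : R}
    (hr : r ∈ cpSpanSet ι bar U) (hs : s ∈ cpSpanSet ι bar U') :
    r * s ∈ cpSpanSet ι bar {x | ∃ a ∈ U, ∃ b ∈ U', x = a + b} := by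
  obtain ⟨cr, hcr, rfl⟩ := hr
  obtain ⟨cs, hcs, rfl⟩ := hs
  rw [Finsupp.sum, Finset.sum_mul]
  refine cp_sum_mem _ _ fun a ha => ?_
  rw [Finsupp.sum, Finset.mul_sum]
  refine cp_sum_mem _ _ fun b hb => ?_
  rw [cp_prod h]
  exact cp_single_mem ι bar _ ⟨a, hcr a ha, b, hcs b hb, rfl⟩

lemma charPair_add {n : ℕ} (φ : EuclideanSpace ℝ (Fin n)) (a b : Fin n → ℤ) :
    charPair φ (a + b) = charPair φ a + charPair φ b := by
  simp only [charPair, Pi.add_apply, Int.cast_add, mul_add, Finset.sum_add_distrib]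

lemma charPair_neg {n : ℕ} (φ : EuclideanSpace ℝ (Fin n)) (a : Fin n → ℤ) :
    charPair φ (-a) = -charPair φ a := by
  simp only [charPair, Pi.neg_apply, Int.cast_neg, mul_neg, Finset.sum_neg_distrib]

lemma charPair_zsmul {n : ℕ} (φ : EuclideanSpace ℝ (Fin n)) (k : ℤ) (a : Fin n → ℤ) :
    charPair φ (k • a) = (k : ℝ) * charPair φ a := by
  rw [charPair, charPair, Finset.mul_sum]
  refine Finset.sum_congr rfl fun i _ => ?_
  have : (k • a) i = k * a i := rfl
  rw [this]
  push_cast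
  ring

/-- If `M` is `D∗C`-torsion for `C = ⟨c⟩` and `φ(c) ≠ 0` then `φ ∉ Δ(M)`. -/
lemma cp_notMem_delta {ι : D →+* R} {bar : (Fin n → ℤ) → Rˣ} {σ : (Fin n → ℤ) → D ≃+* D}
    {τ : (Fin n → ℤ) → (Fin n → ℤ) → D} (h : IsCrossedProduct D R ι bar σ τ)
    (M : Type u) [AddCommGroup M] [Module Rᵐᵒᵖ M]
    (c : Fin n → ℤ) (C : AddSubgroup (Fin n → ℤ)) (hC : C = AddSubgroup.closure {c})
    (htor : IsCPTorsionOver ι bar C M) (X : Finset M)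
    (φ : EuclideanSpace ℝ (Fin n)) (hφ : charPair φ c ≠ 0) :
    φ ∉ DeltaSet ι bar M X := by
  intro hmem
  refine hmem (le_antisymm ?_ ?_)
  · -- hard direction
    rw [trailingSub, AddSubgroup.closure_le]
    rintro m ⟨x, hx, β, hβ, rfl⟩
    obtain ⟨β', ⟨c', hc'supp, rfl⟩, hβ'ne, hann⟩ := htor x
    have hc'ne : c' ≠ 0 := by rintro rfl; simp at hβ'ne
    obtain ⟨a₀, ha₀, hmin⟩ := Finset.exists_min_image c'.support (fun a => charPair φ a)
      (Finsupp.support_nonempty_iff.mpr hc'ne)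
    have hd₀ : c' a₀ ≠ 0 := Finsupp.mem_support_iff.1 ha₀
    have hstrict : ∀ a ∈ c'.support, a ≠ a₀ → charPair φ a₀ < charPair φ a := by
      intro a ha hne
      rcases lt_or_eq_of_le (hmin a ha) with hlt | heq
      · exact hlt
      · exfalso
        apply hne
        obtain ⟨k, hk⟩ := AddSubgroup.mem_closure_singleton.1 (hC ▸ hc'supp a ha)
        obtain ⟨k₀, hk₀⟩ := AddSubgroup.mem_closure_singleton.1 (hC ▸ hc'supp a₀ ha₀)
        have hkk : (k₀ : ℝ) * charPair φ c = (k : ℝ) * charPair φ c := by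
          rw [← charPair_zsmul, ← charPair_zsmul, hk, hk₀, heq]
        have : k₀ = k := by exact_mod_cast mul_right_cancel₀ hφ hkk
        rw [← hk, ← hk₀, this]
    -- construct the right inverse w of the trailing unit
    set t : D := τ a₀ (-a₀) * τ 0 0 with ht
    have htne : t ≠ 0 := mul_ne_zero (h.τ_ne_zero _ _) (h.τ_ne_zero _ _)
    set e : D := (σ a₀).symm ((c' a₀)⁻¹ * t⁻¹) with he
    set w : R := ι e * (bar (-a₀) : R) with hw
    have bar0 : ((bar 0 : Rˣ) : R) = ι (τ 0 0) := by
      have h2 := h.mul_bar 0 0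
      rw [add_zero] at h2
      calc ((bar 0 : Rˣ) : R) = (bar 0 : R) * (bar 0 : R) * ((bar 0)⁻¹ : Rˣ) := by
            rw [Units.mul_inv_cancel_right]
        _ = ι (τ 0 0) * (bar 0 : R) * ((bar 0)⁻¹ : Rˣ) := by rw [h2]
        _ = ι (τ 0 0) := by rw [Units.mul_inv_cancel_right]
    have huw : (ι (c' a₀) * (bar a₀ : R)) * w = 1 := by
      rw [hw, cp_prod h]
      have hadd : a₀ + -a₀ = 0 := by abel
      rw [hadd, bar0, ← map_mul]
      have hσ : σ a₀ e = (c' a₀)⁻¹ * t⁻¹ := (σ a₀).apply_symm_apply _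
      have : c' a₀ * σ a₀ e * τ a₀ (-a₀) * τ 0 0 = 1 := by
        rw [hσ, ← mul_assoc, mul_inv_cancel₀ hd₀, one_mul, mul_assoc, ← ht,
          inv_mul_cancel₀ htne]
      rw [this, map_one]
    -- decompose β' into trailing term and the rest
    have hdecomp : (c'.sum fun a d => ι d * (bar a : R))
        = ι (c' a₀) * (bar a₀ : R) + ((c'.erase a₀).sum fun a d => ι d * (bar a : R)) := by
      conv_lhs => rw [← Finsupp.single_add_erase a₀ c']
      rw [Finsupp.sum_add_index' (fun a => by simp) (fun a b₁ b₂ => by rw [map_add, add_mul]),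
        Finsupp.sum_single_index (by simp)]
    set ρ : R := (c'.erase a₀).sum fun a d => ι d * (bar a : R) with hρdef
    have h1 : op (ι (c' a₀) * (bar a₀ : R)) • x = -(op ρ • x) := by
      have h0 : op (ι (c' a₀) * (bar a₀ : R)) • x + op ρ • x = 0 := by
        rw [← add_smul, ← op_add, ← hdecomp]
        exact hann
      exact eq_neg_of_add_eq_zero_left h0
    have hx' : x = op (-(ρ * w)) • x := by
      calc x = (1 : Rᵐᵒᵖ) • x := (one_smul _ x).symm
        _ = op ((ι (c' a₀) * (bar a₀ : R)) * w) • x := by rw [huw, op_one]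
        _ = (op w * op (ι (c' a₀) * (bar a₀ : R))) • x := by rw [← op_mul]
        _ = op w • (op (ι (c' a₀) * (bar a₀ : R)) • x) := by rw [mul_smul]
        _ = op w • (-(op ρ • x)) := by rw [h1]
        _ = -((op w * op ρ) • x) := by rw [smul_neg, mul_smul]
        _ = -(op (ρ * w) • x) := by rw [← op_mul]
        _ = op (-(ρ * w)) • x := by rw [op_neg, neg_smul]
    -- membership of the correction factor
    have hρmem : ρ ∈ cpSpanSet ι bar {a | a ∈ c'.support ∧ a ≠ a₀} := by
      refine ⟨c'.erase a₀, fun a ha => ?_, rfl⟩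
      rw [Finsupp.support_erase, Finset.mem_erase] at ha
      exact ⟨ha.2, ha.1⟩
    have hwmem : w ∈ cpSpanSet ι bar {y | y = -a₀} := cp_single_mem ι bar e rfl
    have hγmem : -(ρ * w) ∈ cpSpanSet ι bar { a | 0 < charPair φ a } := by
      apply cp_neg_mem
      refine cp_mono ?_ (cp_mul_mem h hρmem hwmem)
      rintro y ⟨a, ⟨ha, hane⟩, b, hb, rfl⟩
      have hb' : b = -a₀ := hb
      subst hb'
      have := hstrict a ha hane
      simp only [Set.mem_setOf_eq, charPair_add, charPair_neg]
      linarith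
    have hfin : op β • x = op (-(ρ * w) * β) • x := by
      conv_lhs => rw [hx', ← mul_smul, ← op_mul]
    refine AddSubgroup.subset_closure ⟨x, hx, -(ρ * w) * β, ?_, hfin⟩
    refine cp_mono ?_ (cp_mul_mem h hγmem hβ)
    rintro y ⟨a, ha, b, hb, rfl⟩
    have ha' : 0 < charPair φ a := ha
    have hb' : 0 ≤ charPair φ b := hb
    simp only [Set.mem_setOf_eq, charPair_add]
    linarith
  · refine AddSubgroup.closure_mono ?_
    rintro m ⟨x, hx, β, hβ, rfl⟩
    exact ⟨x, hx, β, cp_mono (fun a (ha : 0 < charPair φ a) => le_of_lt ha) hβ, rfl⟩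

/-- **Lemma.** Let `M` be a nonzero finitely generated right `D∗A`-module with
`gk(M) ≥ 1`, let `C < A` be an infinite cyclic subgroup such that `M` is `D∗C`-torsion,
and let `V` be a carrier space of `Δ*(M)`, say `V = ker(res_{B_V})` for an isolated
subgroup `B_V ≤ A`.  Then `B_V ∩ C ≠ ⟨1⟩`. -/
theorem carrierSpace_subgroup_meets_cyclic
    {ι : D →+* R} {bar : (Fin n → ℤ) → Rˣ} {σ : (Fin n → ℤ) → D ≃+* D}
    {τ : (Fin n → ℤ) → (Fin n → ℤ) → D}
    (h : IsCrossedProduct D R ι bar σ τ)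
    (M : Type u) [AddCommGroup M] [Module Rᵐᵒᵖ M] [Nontrivial M] [Module.Finite Rᵐᵒᵖ M]
    (hgk : 1 ≤ gkCP ι bar M)
    (c : Fin n → ℤ) (hc : c ≠ 0) (C : AddSubgroup (Fin n → ℤ))
    (hC : C = AddSubgroup.closure {c})
    (htor : IsCPTorsionOver ι bar C M)
    (X : Finset M) (hX : Submodule.span Rᵐᵒᵖ (X : Set M) = ⊤)
    (V : Submodule ℝ (EuclideanSpace ℝ (Fin n)))
    (hV : IsCarrierSpace (essentialPart (DeltaSet ι bar M X)) V)
    (B_V : AddSubgroup (Fin n → ℤ))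
    (hisolated : ∀ (a : Fin n → ℤ) (k : ℤ), k ≠ 0 → k • a ∈ B_V → a ∈ B_V)
    (hBV : (V : Set (EuclideanSpace ℝ (Fin n))) = { φ | ∀ b ∈ B_V, charPair φ b = 0 }) :
    B_V ⊓ C ≠ ⊥ := by
  intro hbot
  classical
  -- the linear functional `φ ↦ φ(c)`
  let L : EuclideanSpace ℝ (Fin n) →ₗ[ℝ] ℝ :=
    { toFun := fun φ => charPair φ c
      map_add' := fun φ ψ => by
        simp only [charPair, PiLp.add_apply, add_mul, Finset.sum_add_distrib]
      map_smul' := fun r φ => by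
        simp only [charPair, PiLp.smul_apply, smul_eq_mul, RingHom.id_apply, Finset.mul_sum,
          mul_assoc] }
  -- every element of `V` kills `c`
  have hVle : ∀ ψ ∈ (V : Set (EuclideanSpace ℝ (Fin n))), charPair ψ c = 0 := by
    obtain ⟨x₀, hreg, ε, hε, hVeq⟩ := hV
    have hclosed : IsClosed {ψ : EuclideanSpace ℝ (Fin n) | charPair ψ c = 0} := by
      have : IsClosed {ψ : EuclideanSpace ℝ (Fin n) | L ψ = 0} :=
        isClosed_eq L.continuous_of_finiteDimensional continuous_const
      exact this
    have hsub : essentialPart (DeltaSet ι bar M X)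
        ⊆ {ψ : EuclideanSpace ℝ (Fin n) | charPair ψ c = 0} := by
      apply closure_minimal ?_ hclosed
      intro ψ hψ
      by_contra hne
      exact (cp_notMem_delta h M c C hC htor X ψ hne) hψ.1
    have hVker : V ≤ LinearMap.ker L := by
      rw [hVeq]
      apply Submodule.span_le.2
      intro ψ hψ
      exact LinearMap.mem_ker.2 (hsub hψ.1)
    intro ψ hψ
    exact hVker hψ
  -- the rational annihilator argument: `g c` lies in the ℚ-span of `g '' B_V`
  let g : (Fin n → ℤ) → (Fin n → ℚ) := fun b i => (b i : ℚ)
  let S : Set (Fin n → ℚ) := g '' (B_V : Set (Fin n → ℤ))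
  have hcW : g c ∈ Submodule.span ℚ S := by
    by_contra hc'
    obtain ⟨f, hfne, hfbot⟩ :=
      Submodule.exists_dual_map_eq_bot_of_notMem hc' inferInstance
    set wv : Fin n → ℚ := fun i => f (fun j => if i = j then 1 else 0) with hwv
    set φ : EuclideanSpace ℝ (Fin n) :=
      (WithLp.equiv 2 (Fin n → ℝ)).symm (fun i => ((wv i : ℚ) : ℝ)) with hφdef
    have hφval : ∀ b : Fin n → ℤ, charPair φ b = ((f (g b) : ℚ) : ℝ) := by
      intro b
      rw [charPair, LinearMap.pi_apply_eq_sum_univ f (g b), Rat.cast_sum]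
      refine Finset.sum_congr rfl fun i _ => ?_
      have hφi : φ i = ((wv i : ℚ) : ℝ) := by
        rw [hφdef]; rfl
      rw [hφi]
      have : g b i = (b i : ℚ) := rfl
      rw [smul_eq_mul, this]
      push_cast
      ring
    have hφV : φ ∈ (V : Set (EuclideanSpace ℝ (Fin n))) := by
      rw [hBV]
      intro b hb
      rw [hφval b]
      have hgb : g b ∈ Submodule.span ℚ S := Submodule.subset_span ⟨b, hb, rfl⟩
      have hmap : f (g b) ∈ (Submodule.span ℚ S).map f := Submodule.mem_map_of_mem hgb
      rw [hfbot] at hmap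
      rw [Submodule.mem_bot] at hmap
      rw [hmap]
      simp
    have h0 := hVle φ hφV
    rw [hφval c] at h0
    exact hfne (by exact_mod_cast h0)
  -- extract a rational combination and clear denominators
  obtain ⟨m, q, v, hsum⟩ := Submodule.mem_span_set'.1 hcW
  have hv : ∀ i, ∃ b ∈ B_V, g b = (v i : Fin n → ℚ) := by
    intro i
    obtain ⟨b, hb, hgb⟩ := (v i).2
    exact ⟨b, hb, hgb⟩
  choose b hbB hgb using hv
  set k : ℕ := ∏ i, (q i).den with hk
  have hkpos : 0 < k := Finset.prod_pos fun i _ => (q i).pos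
  have hden : ∀ i, ((q i).den : ℤ) ∣ (k : ℤ) := fun i =>
    Int.natCast_dvd_natCast.2 (Finset.dvd_prod_of_mem _ (Finset.mem_univ i))
  set mc : Fin m → ℤ := fun i => (q i).num * ((k : ℤ) / ((q i).den : ℤ)) with hmc
  have hcoef : ∀ i, (mc i : ℚ) = (k : ℚ) * q i := by
    intro i
    have hd : ((q i).den : ℚ) ≠ 0 := by
      exact_mod_cast (q i).den_nz
    have hkd : ((k : ℤ) / ((q i).den : ℤ)) * ((q i).den : ℤ) = (k : ℤ) :=
      Int.ediv_mul_cancel (hden i)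
    have h1 : ((((k : ℤ) / ((q i).den : ℤ)) : ℤ) : ℚ) * ((q i).den : ℚ) = (k : ℚ) := by
      exact_mod_cast congrArg (fun z : ℤ => (z : ℚ)) hkd
    have h2 : (q i) = ((q i).num : ℚ) / ((q i).den : ℚ) := (Rat.num_div_den _).symm
    have h3 : (mc i : ℚ) = ((q i).num : ℚ) * ((((k : ℤ) / ((q i).den : ℤ)) : ℤ) : ℚ) := by
      rw [hmc]; push_cast; ring
    have h5 : (q i) * ((q i).den : ℚ) = ((q i).num : ℚ) := (eq_div_iff hd).1 h2
    have h4 : (mc i : ℚ) * ((q i).den : ℚ) = ((k : ℚ) * q i) * ((q i).den : ℚ) := by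
      rw [h3, mul_assoc, h1, mul_assoc, h5]
      ring
    exact mul_right_cancel₀ hd h4
  have hinj : Function.Injective g := by
    intro x y hxy
    funext j
    have h0 := congrFun hxy j
    have h0' : ((x j : ℚ)) = ((y j : ℚ)) := h0
    exact_mod_cast h0'
  have hkc : ((k : ℤ) • c) ∈ B_V := by
    have heq : (k : ℤ) • c = ∑ i, mc i • b i := by
      apply hinj
      funext j
      have hs := congrFun hsum j
      simp only [Finset.sum_apply, Pi.smul_apply, smul_eq_mul] at hs
      have hL : g ((k : ℤ) • c) j = (k : ℚ) * (c j : ℚ) := by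
        simp only [g, Pi.smul_apply, smul_eq_mul]
        push_cast
        ring
      have hR : g (∑ i, mc i • b i) j = ∑ i, (mc i : ℚ) * (b i j : ℚ) := by
        simp only [g, Finset.sum_apply, Pi.smul_apply, smul_eq_mul]
        push_cast
        rfl
      rw [hL, hR]
      calc (k : ℚ) * (c j : ℚ) = (k : ℚ) * ∑ i, q i * (v i : Fin n → ℚ) j := by rw [hs]
        _ = ∑ i, (k : ℚ) * (q i * (v i : Fin n → ℚ) j) := by rw [Finset.mul_sum]
        _ = ∑ i, (mc i : ℚ) * (b i j : ℚ) := by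
            refine Finset.sum_congr rfl fun i _ => ?_
            have : ((b i j : ℚ)) = (v i : Fin n → ℚ) j := congrFun (hgb i) j
            rw [this, hcoef i]
            ring
    rw [heq]
    exact AddSubgroup.sum_mem _ fun i _ => AddSubgroup.zsmul_mem _ (hbB i) _
  have hkcC : ((k : ℤ) • c) ∈ C := by
    rw [hC]
    exact AddSubgroup.mem_closure_singleton.2 ⟨(k : ℤ), rfl⟩
  have hmem : ((k : ℤ) • c) ∈ B_V ⊓ C := ⟨hkc, hkcC⟩
  rw [hbot, AddSubgroup.mem_bot] at hmem
  obtain ⟨j, hj⟩ : ∃ j, c j ≠ 0 := by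
    by_contra hall
    push_neg at hall
    exact hc (funext hall)
  have hzj := congrFun hmem j
  simp only [Pi.smul_apply, smul_eq_mul, Pi.zero_apply] at hzj
  rcases mul_eq_zero.1 hzj with hk0 | hcj
  · have : (k : ℤ) ≠ 0 := by positivity
    exact this hk0
  · exact hj hcj

end BrookesGroves
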